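/- Let α_1, α_2 > −1 and let n, m be nonnegative integers. Define F : (0,∞) → ℝ by F(x) = e^{x} x^{−α_1} (d^n/dx^n) [ x^{α_1−α_2+n} (d^m/dx^m) ( x^{α_2+m} e^{−x} ) ]. Then P(x) = (−1)^{n+m} F(x) coincides on (0,∞) with a monic polynomial of degree n + m that satisfies ∫_0^∞ P(x) x^{α_1} e^{−x} x^k dx = 0 for k = 0,…,n−1 and ∫_0^∞ P(x) x^{α_2} e^{−x} x^k dx = 0 for k = 0,…,m−1. -/

import Mathlib

open MeasureTheory Polynomial Set Filter Topology

namespace MLaguerre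

noncomputable def G (β : ℝ) (Q : ℝ[X]) : ℝ[X] := C β * Q - X * Q + X * derivative Q

noncomputable def Gs (β : ℝ) : ℕ → ℝ[X] → ℝ[X]
  | 0, Q => Q
  | k+1, Q => G (β - k) (Gs β k Q)

@[simp] lemma Gs_zero (β : ℝ) (Q : ℝ[X]) : Gs β 0 Q = Q := rfl

lemma G_add (c γ : ℝ) (Q : ℝ[X]) : G (c + γ) Q = C c * Q + G γ Q := by
  simp only [G, C_add]; ring

lemma hasDerivAt_step (β : ℝ) (Q : ℝ[X]) {x : ℝ} (hx : 0 < x) :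
    HasDerivAt (fun z => z ^ β * Real.exp (-z) * Q.eval z)
      (x ^ (β - 1) * Real.exp (-x) * (G β Q).eval x) x := by
  have h1 : HasDerivAt (fun z : ℝ => z ^ β) (β * x ^ (β - 1)) x :=
    Real.hasDerivAt_rpow_const (Or.inl hx.ne')
  have h2 : HasDerivAt (fun z : ℝ => Real.exp (-z)) (-Real.exp (-x)) x := by
    simpa using (hasDerivAt_neg x).exp
  have h3 := Q.hasDerivAt x
  have h := (h1.mul h2).mul h3
  refine HasDerivAt.congr_deriv h ?_
  have hxβ : x ^ β = x ^ (β - 1) * x := by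
    rw [← Real.rpow_add_one hx.ne', sub_add_cancel]
  simp only [G, eval_add, eval_sub, eval_mul, eval_C, eval_X, Pi.mul_apply]
  rw [hxβ]; ring

lemma iteratedDeriv_chain (β : ℝ) (Q : ℝ[X]) (k : ℕ) :
    ∀ x ∈ Ioi (0:ℝ), iteratedDeriv k (fun z => z ^ β * Real.exp (-z) * Q.eval z) x
      = x ^ (β - k) * Real.exp (-x) * (Gs β k Q).eval x := by
  induction k with
  | zero => intro x _; simp [Gs]
  | succ k ih =>
    intro x hx
    rw [iteratedDeriv_succ]
    have hev : iteratedDeriv k (fun z => z ^ β * Real.exp (-z) * Q.eval z)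
        =ᶠ[nhds x] fun y => y ^ (β - k) * Real.exp (-y) * (Gs β k Q).eval y := by
      filter_upwards [isOpen_Ioi.mem_nhds hx] with y hy using ih y hy
    rw [hev.deriv_eq, (hasDerivAt_step (β - k) (Gs β k Q) hx).deriv]
    have h1 : β - (k+1:ℕ) = β - k - 1 := by push_cast; ring
    rw [h1]
    rfl

lemma iteratedDeriv_congr_open {f g : ℝ → ℝ} {s : Set ℝ} (hs : IsOpen s)
    (h : Set.EqOn f g s) (N : ℕ) :
    Set.EqOn (iteratedDeriv N f) (iteratedDeriv N g) s := by
  induction N with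
  | zero => simpa
  | succ N ih =>
    intro x hx
    rw [iteratedDeriv_succ, iteratedDeriv_succ]
    apply Filter.EventuallyEq.deriv_eq
    filter_upwards [hs.mem_nhds hx] with y hy using ih hy

lemma G_deg (β : ℝ) {Q : ℝ[X]} (hQ : Q ≠ 0) :
    (G β Q).natDegree = Q.natDegree + 1 ∧ (G β Q).leadingCoeff = -Q.leadingCoeff := by
  set d := Q.natDegree with hd
  have hcoeff : (G β Q).coeff (d + 1) = -Q.leadingCoeff := by
    simp only [G, coeff_add, coeff_sub, coeff_C_mul, coeff_X_mul, coeff_derivative]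
    rw [coeff_eq_zero_of_natDegree_lt (by omega : Q.natDegree < d + 1)]
    rw [leadingCoeff, ← hd]; ring
  have hle : (G β Q).natDegree ≤ d + 1 := by
    apply natDegree_add_le_iff_left _ _ ?_ |>.mpr ?_
    · calc (X * derivative Q).natDegree ≤ 1 + Q.derivative.natDegree := by
            simpa using natDegree_mul_le (p := (X:ℝ[X])) (q := derivative Q)
        _ ≤ d + 1 := by have := natDegree_derivative_le Q; omega
    · apply le_trans (natDegree_sub_le _ _)
      apply max_le
      · exact le_trans (natDegree_C_mul_le _ _) (by omega)
      · simpa [add_comm] using natDegree_mul_le (p := (X:ℝ[X])) (q := Q)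
  have hne : (G β Q).coeff (d+1) ≠ 0 := by
    rw [hcoeff]; simpa using leadingCoeff_ne_zero.mpr hQ
  have hdeg : (G β Q).natDegree = d + 1 :=
    le_antisymm hle (le_natDegree_of_ne_zero hne)
  exact ⟨hdeg, by rw [leadingCoeff, hdeg, hcoeff]⟩

lemma Gs_deg (β : ℝ) {Q : ℝ[X]} (hQ : Q ≠ 0) (k : ℕ) :
    (Gs β k Q).natDegree = Q.natDegree + k ∧
    (Gs β k Q).leadingCoeff = (-1)^k * Q.leadingCoeff ∧ Gs β k Q ≠ 0 := by
  induction k with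
  | zero => simpa [Gs] using hQ
  | succ k ih =>
    obtain ⟨h1, h2, h3⟩ := ih
    have hG := G_deg (β - k) h3
    refine ⟨?_, ?_, ?_⟩
    · show (G (β - k) (Gs β k Q)).natDegree = _
      rw [hG.1, h1]; ring
    · show (G (β - k) (Gs β k Q)).leadingCoeff = _
      rw [hG.2, h2, pow_succ]; ring
    · show G (β - k) (Gs β k Q) ≠ 0
      intro hcontra
      have := hG.2
      rw [hcontra] at this
      simp only [leadingCoeff_zero] at this
      exact (leadingCoeff_ne_zero.mpr h3) (by rw [h2] at this ⊢; linarith [this])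

lemma eval_expand {s : ℝ} {x : ℝ} (hx : 0 < x) (Q : ℝ[X]) :
    x ^ s * Real.exp (-x) * Q.eval x
      = ∑ i ∈ Finset.range (Q.natDegree + 1), Q.coeff i * (x ^ (s + i) * Real.exp (-x)) := by
  rw [Polynomial.eval_eq_sum_range, Finset.mul_sum]
  refine Finset.sum_congr rfl fun i _ => ?_
  rw [Real.rpow_add hx, Real.rpow_natCast]
  ring

lemma integrableOn_rpow_exp_poly {s : ℝ} (hs : -1 < s) (Q : ℝ[X]) :
    IntegrableOn (fun x => x ^ s * Real.exp (-x) * Q.eval x) (Ioi (0:ℝ)) := by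
  have h : ∀ i : ℕ, IntegrableOn
      (fun x : ℝ => Q.coeff i * (x ^ (s + i) * Real.exp (-x))) (Ioi (0:ℝ)) := by
    intro i
    refine Integrable.const_mul ?_ _
    have hi : (0:ℝ) ≤ i := Nat.cast_nonneg i
    have h0 : (0:ℝ) < s + i + 1 := by linarith
    have := Real.GammaIntegral_convergent h0
    refine this.congr_fun (fun x hx => ?_) measurableSet_Ioi
    rw [add_sub_cancel_right]; ring
  have hsum := MeasureTheory.integrable_finset_sum (μ := volume.restrict (Ioi (0:ℝ)))
    (Finset.range (Q.natDegree + 1)) (fun i _ => h i)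
  refine IntegrableOn.congr_fun hsum (fun x hx => ?_) measurableSet_Ioi
  exact (eval_expand hx Q).symm

lemma tendsto_atTop_zero {s : ℝ} (Q : ℝ[X]) :
    Tendsto (fun x : ℝ => x ^ s * Real.exp (-x) * Q.eval x) atTop (𝓝 0) := by
  have h : ∀ i : ℕ, Tendsto (fun x : ℝ => Q.coeff i * (x ^ (s + i) * Real.exp (-x)))
      atTop (𝓝 0) := by
    intro i
    rw [show (0:ℝ) = Q.coeff i * 0 from (mul_zero _).symm]
    apply Tendsto.const_mul
    have := tendsto_rpow_mul_exp_neg_mul_atTop_nhds_zero (s + i) 1 one_pos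
    simpa using this
  have hsum := tendsto_finset_sum (Finset.range (Q.natDegree + 1)) (fun i _ => h i)
  rw [Finset.sum_const_zero] at hsum
  apply hsum.congr'
  filter_upwards [eventually_gt_atTop (0:ℝ)] with x hx
  exact (eval_expand hx Q).symm

lemma integral_G_zero {γ : ℝ} (hγ : 0 < γ) (Q : ℝ[X]) :
    ∫ x in Ioi (0:ℝ), x ^ (γ - 1) * Real.exp (-x) * (G γ Q).eval x = 0 := by
  have hderiv : ∀ x ∈ Ioi (0:ℝ), HasDerivAt (fun z => z ^ γ * Real.exp (-z) * Q.eval z)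
      (x ^ (γ-1) * Real.exp (-x) * (G γ Q).eval x) x := fun x hx => hasDerivAt_step γ Q hx
  have hint : IntegrableOn (fun x => x ^ (γ-1) * Real.exp (-x) * (G γ Q).eval x) (Ioi (0:ℝ)) :=
    integrableOn_rpow_exp_poly (by linarith) _
  have hcont : ContinuousWithinAt (fun z : ℝ => z ^ γ * Real.exp (-z) * Q.eval z) (Ici 0) 0 := by
    apply ContinuousAt.continuousWithinAt
    exact ((Real.continuousAt_rpow_const 0 γ (Or.inr hγ.le)).mul
      ((Real.continuous_exp.comp continuous_neg).continuousAt)).mul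
      (Polynomial.continuousAt Q)
  have h := integral_Ioi_of_hasDerivAt_of_tendsto hcont hderiv hint (tendsto_atTop_zero Q)
  rw [h, Real.zero_rpow hγ.ne']
  ring

lemma integral_IBP (c γ : ℝ) (h : 0 < c + γ) (Q : ℝ[X]) :
    ∫ x in Ioi (0:ℝ), x ^ c * (x ^ (γ - 1) * Real.exp (-x) * (G γ Q).eval x)
      = -c * ∫ x in Ioi (0:ℝ), x ^ (c - 1) * (x ^ γ * Real.exp (-x) * Q.eval x) := by
  have h0 := integral_G_zero h Q
  have hA1 : ∀ x : ℝ, 0 < x → x ^ c * x ^ (γ-1) = x ^ (c+γ-1) := by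
    intro x hx; rw [← Real.rpow_add hx]; ring_nf
  have hA2 : ∀ x : ℝ, 0 < x → x ^ (c-1) * x ^ γ = x ^ (c+γ-1) := by
    intro x hx; rw [← Real.rpow_add hx]; ring_nf
  have int1 : IntegrableOn
      (fun x => x ^ c * (x ^ (γ-1) * Real.exp (-x) * (G γ Q).eval x)) (Ioi (0:ℝ)) := by
    refine (integrableOn_rpow_exp_poly (s := c+γ-1) (by linarith) (G γ Q)).congr_fun
      (fun x hx => ?_) measurableSet_Ioi
    beta_reduce; rw [← hA1 x hx]; ring
  have int2 : IntegrableOn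
      (fun x => x ^ (c-1) * (x ^ γ * Real.exp (-x) * Q.eval x)) (Ioi (0:ℝ)) := by
    refine (integrableOn_rpow_exp_poly (s := c+γ-1) (by linarith) Q).congr_fun
      (fun x hx => ?_) measurableSet_Ioi
    beta_reduce; rw [← hA2 x hx]; ring
  have key : ∫ x in Ioi (0:ℝ), x ^ (c+γ-1) * Real.exp (-x) * (G (c+γ) Q).eval x
      = (∫ x in Ioi (0:ℝ), x ^ c * (x ^ (γ-1) * Real.exp (-x) * (G γ Q).eval x))
        + c * ∫ x in Ioi (0:ℝ), x ^ (c-1) * (x ^ γ * Real.exp (-x) * Q.eval x) := by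
    rw [← MeasureTheory.integral_const_mul, ← MeasureTheory.integral_add int1 (int2.const_mul c)]
    refine setIntegral_congr_fun measurableSet_Ioi (fun x hx => ?_)
    have hx : (0:ℝ) < x := hx
    rw [G_add]
    simp only [eval_add, eval_mul, eval_C]
    linear_combination (Real.exp (-x) * eval x (G γ Q)) * (hA1 x hx).symm
      + (c * Real.exp (-x) * eval x Q) * (hA2 x hx).symm
  rw [h0] at key
  linarith

lemma reduce (β₀ c₀ : ℝ) (Q₀ : ℝ[X]) (N : ℕ) (hb : 0 < c₀ + β₀ - N + 1) :
    ∀ t : ℕ, t ≤ N →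
    ∫ x in Ioi (0:ℝ), x ^ c₀ * (x ^ (β₀ - N) * Real.exp (-x) * (Gs β₀ N Q₀).eval x)
      = (∏ j ∈ Finset.range t, -(c₀ - j)) *
        ∫ x in Ioi (0:ℝ), x ^ (c₀ - t) * (x ^ (β₀ - (N - t : ℕ)) * Real.exp (-x)
          * (Gs β₀ (N - t) Q₀).eval x) := by
  intro t
  induction t with
  | zero => intro _; simp
  | succ t ih =>
    intro ht
    rw [ih (by omega)]
    have h1 : N - t = (N - (t+1)) + 1 := by omega
    have e2 : Gs β₀ (N - t) Q₀ = G (β₀ - (N - (t+1) : ℕ)) (Gs β₀ (N - (t+1)) Q₀) := by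
      rw [h1]; rfl
    have hc : ((N - t : ℕ) : ℝ) = ((N - (t+1) : ℕ) : ℝ) + 1 := by
      rw [h1]; push_cast; ring
    have e3 : β₀ - ((N - t : ℕ) : ℝ) = (β₀ - ((N - (t+1) : ℕ) : ℝ)) - 1 := by
      rw [hc]; ring
    have hNt : ((N - (t+1) : ℕ) : ℝ) = (N : ℝ) - (t+1) := by
      have h2 : (t+1) ≤ N := ht
      rw [Nat.cast_sub h2]; norm_num
    have hcond : 0 < (c₀ - t) + (β₀ - ((N - (t+1) : ℕ) : ℝ)) := by
      rw [hNt]; linarith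
    rw [e2, e3, integral_IBP (c₀ - t) (β₀ - ((N - (t+1) : ℕ) : ℝ)) hcond _]
    rw [Finset.prod_range_succ]
    have h3 : c₀ - (t:ℝ) - 1 = c₀ - ((t+1 : ℕ) : ℝ) := by push_cast; ring
    rw [h3]
    ring

lemma reduce_zero (β₀ : ℝ) (Q₀ : ℝ[X]) (N k : ℕ) (hk : k < N)
    (hb : 0 < (k:ℝ) + β₀ - N + 1) :
    ∫ x in Ioi (0:ℝ), x ^ (k:ℝ) * (x ^ (β₀ - N) * Real.exp (-x) * (Gs β₀ N Q₀).eval x) = 0 := by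
  rw [reduce β₀ k Q₀ N hb (k+1) (by omega)]
  rw [Finset.prod_eq_zero (Finset.self_mem_range_succ k) (by simp), zero_mul]

end MLaguerre

open MLaguerre

theorem stmt_10 (α₁ α₂ : ℝ) (h1 : -1 < α₁) (h2 : -1 < α₂)
    (n m : ℕ) (F : ℝ → ℝ)
    (hF : ∀ x ∈ Set.Ioi (0:ℝ),
      F x = Real.exp x * x ^ (-α₁) *
        iteratedDeriv n (fun y => y ^ (α₁ - α₂ + n) *
          iteratedDeriv m (fun z => z ^ (α₂ + m) * Real.exp (-z)) y) x) :
    ∃ P : Polynomial ℝ, P.Monic ∧ P.natDegree = n + m ∧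
      (∀ x ∈ Set.Ioi (0:ℝ), (-1) ^ (n + m) * F x = P.eval x) ∧
      (∀ k < n,
        ∫ x in Set.Ioi (0:ℝ), P.eval x * (x ^ α₁ * Real.exp (-x)) * x ^ k = 0) ∧
      (∀ k < m,
        ∫ x in Set.Ioi (0:ℝ), P.eval x * (x ^ α₂ * Real.exp (-x)) * x ^ k = 0) := by
  set Qm := Gs (α₂ + m) m 1 with hQm
  set R := Gs (α₁ + n) n Qm with hR
  have hQm_facts := Gs_deg (α₂ + (m:ℝ)) (Q := 1) one_ne_zero m
  rw [← hQm] at hQm_facts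
  have hQm_ne : Qm ≠ 0 := hQm_facts.2.2
  have hR_facts := Gs_deg (α₁ + (n:ℝ)) hQm_ne n
  rw [← hR] at hR_facts
  set P := C ((-1:ℝ)^(n+m)) * R with hP
  have hCne : ((-1:ℝ))^(n+m) ≠ 0 := pow_ne_zero _ (by norm_num)
  have hlcR : R.leadingCoeff = (-1:ℝ)^n * ((-1)^m * 1) := by
    rw [hR_facts.2.1, hQm_facts.2.1, leadingCoeff_one]
  have hMonic : P.Monic := by
    show P.leadingCoeff = 1
    rw [hP, leadingCoeff_mul, leadingCoeff_C, hlcR, pow_add]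
    rcases Nat.even_or_odd n with hn | hn <;> rcases Nat.even_or_odd m with hm | hm <;>
      simp [hn.neg_one_pow, hm.neg_one_pow, Odd.neg_one_pow]
  have hdegP : P.natDegree = n + m := by
    rw [hP, natDegree_C_mul hCne, hR_facts.1, hQm_facts.1, natDegree_one]
    omega
  -- evaluation identity
  have hinner : ∀ y ∈ Set.Ioi (0:ℝ),
      iteratedDeriv m (fun z => z ^ (α₂ + m) * Real.exp (-z)) y
      = y ^ (α₂ + (m:ℝ) - m) * Real.exp (-y) * Qm.eval y := by
    intro y hy
    have hfun : (fun z : ℝ => z ^ (α₂ + m) * Real.exp (-z))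
        = (fun z : ℝ => z ^ (α₂ + (m:ℝ)) * Real.exp (-z) * (1:ℝ[X]).eval z) := by
      funext z; simp
    rw [hfun]
    exact iteratedDeriv_chain (α₂ + m) 1 m y hy
  have houter : ∀ x ∈ Set.Ioi (0:ℝ),
      iteratedDeriv n (fun y => y ^ (α₁ - α₂ + n) *
        iteratedDeriv m (fun z => z ^ (α₂ + m) * Real.exp (-z)) y) x
      = x ^ (α₁ + (n:ℝ) - n) * Real.exp (-x) * R.eval x := by
    intro x hx
    have heq : Set.EqOn (fun y => y ^ (α₁ - α₂ + n) *
        iteratedDeriv m (fun z => z ^ (α₂ + m) * Real.exp (-z)) y)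
        (fun y : ℝ => y ^ (α₁ + (n:ℝ)) * Real.exp (-y) * Qm.eval y) (Set.Ioi 0) := by
      intro y hy
      have hy0 : (0:ℝ) < y := hy
      simp only
      rw [hinner y hy]
      have e1 : y ^ (α₁ - α₂ + (n:ℝ)) * y ^ (α₂ + (m:ℝ) - m) = y ^ (α₁ + (n:ℝ)) := by
        rw [← Real.rpow_add hy0]; congr 1; ring
      linear_combination (Real.exp (-y) * Qm.eval y) * e1
    rw [iteratedDeriv_congr_open isOpen_Ioi heq n hx]
    exact iteratedDeriv_chain (α₁ + n) Qm n x hx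
  refine ⟨P, hMonic, hdegP, ?_, ?_, ?_⟩
  · intro x hx
    have hx0 : (0:ℝ) < x := hx
    rw [hF x hx, houter x hx]
    have hxpow : x ^ (-α₁) * x ^ (α₁ + (n:ℝ) - n) = 1 := by
      rw [← Real.rpow_add hx0]
      norm_num
    have hexp : Real.exp x * Real.exp (-x) = 1 := by
      rw [← Real.exp_add]; simp
    simp only [hP, eval_mul, eval_C]
    linear_combination ((-1:ℝ)^(n+m) * R.eval x * Real.exp x * Real.exp (-x)) * hxpow
      + ((-1:ℝ)^(n+m) * R.eval x) * hexp
  · intro k hk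
    have hk0 : (0:ℝ) ≤ k := Nat.cast_nonneg k
    have hz := reduce_zero (α₁ + n) Qm n k hk (by linarith)
    rw [← hR] at hz
    have hcong : ∫ x in Set.Ioi (0:ℝ), P.eval x * (x ^ α₁ * Real.exp (-x)) * x ^ k
        = ((-1:ℝ)^(n+m)) * ∫ x in Set.Ioi (0:ℝ),
            x ^ (k:ℝ) * (x ^ (α₁ + (n:ℝ) - n) * Real.exp (-x) * R.eval x) := by
      rw [← MeasureTheory.integral_const_mul]
      refine setIntegral_congr_fun measurableSet_Ioi (fun x hx => ?_)
      have hx0 : (0:ℝ) < x := hx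
      simp only [hP, eval_mul, eval_C]
      rw [show α₁ + (n:ℝ) - n = α₁ from by ring, ← Real.rpow_natCast x k]
      ring
    rw [hcong, hz, mul_zero]
  · intro k hk
    have hk0 : (0:ℝ) ≤ k := Nat.cast_nonneg k
    have hm0 : (0:ℝ) ≤ m := Nat.cast_nonneg m
    have hn0 : (0:ℝ) ≤ n := Nat.cast_nonneg n
    have hz2 := reduce_zero (α₂ + m) 1 m k hk (by linarith)
    rw [← hQm] at hz2
    have hred := reduce (α₁ + n) ((k:ℝ) + α₂ - α₁) Qm n (by linarith) n le_rfl
    rw [← hR] at hred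
    simp only [Nat.sub_self, Gs_zero, Nat.cast_zero, sub_zero] at hred
    have hstep : ∫ x in Set.Ioi (0:ℝ),
          x ^ ((k:ℝ) + α₂ - α₁ - n) * (x ^ (α₁ + (n:ℝ)) * Real.exp (-x) * Qm.eval x)
        = ∫ x in Set.Ioi (0:ℝ),
          x ^ (k:ℝ) * (x ^ (α₂ + (m:ℝ) - m) * Real.exp (-x) * Qm.eval x) := by
      refine setIntegral_congr_fun measurableSet_Ioi (fun x hx => ?_)
      have hx0 : (0:ℝ) < x := hx
      have e1 : x ^ ((k:ℝ) + α₂ - α₁ - n) * x ^ (α₁ + (n:ℝ))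
          = x ^ (k:ℝ) * x ^ (α₂ + (m:ℝ) - m) := by
        rw [← Real.rpow_add hx0, ← Real.rpow_add hx0]
        congr 1; ring
      linear_combination (Real.exp (-x) * Qm.eval x) * e1
    have hA : ∫ x in Set.Ioi (0:ℝ), P.eval x * (x ^ α₂ * Real.exp (-x)) * x ^ k
        = ((-1:ℝ)^(n+m)) * ∫ x in Set.Ioi (0:ℝ),
            x ^ ((k:ℝ) + α₂ - α₁) * (x ^ (α₁ + (n:ℝ) - n) * Real.exp (-x) * R.eval x) := by
      rw [← MeasureTheory.integral_const_mul]
      refine setIntegral_congr_fun measurableSet_Ioi (fun x hx => ?_)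
      have hx0 : (0:ℝ) < x := hx
      have e1 : x ^ ((k:ℝ) + α₂ - α₁) * x ^ (α₁ + (n:ℝ) - n) = x ^ (k:ℕ) * x ^ α₂ := by
        rw [← Real.rpow_natCast x k, ← Real.rpow_add hx0, ← Real.rpow_add hx0]
        congr 1; ring
      simp only [hP, eval_mul, eval_C]
      linear_combination (-((-1:ℝ)^(n+m)) * Real.exp (-x) * R.eval x) * e1
    rw [hA, hred, hstep, hz2, mul_zero, mul_zero]
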